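/- Lower bound for the Riccati-type value function: let 𝒪 ⊂ ℝⁿ nonempty compact, φ = ½dist(·,𝒪)², p the positive root of p²+λp−𝔠=0. For any admissible control α with trajectory y and any a.e.-defined q(t) ∈ ∂^C φ(y(t)) with d/dt φ(y(t)) = ⟨q(t),α(t)⟩ and ½|q(t)|² ≤ φ(y(t)), one has p(λφ(y(t)) − d/dt φ(y(t))) ≤ ½|α(t)|² + 𝔠 φ(y(t)) for a.e. t, and consequently p·φ(x) ≤ ∫₀^∞ (½|α(t)|² + 𝔠 φ(y(t))) e^{−λt} dt. -/

import Mathlib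

open MeasureTheory Set Metric Filter

/-- Clarke generalized directional derivative. -/
noncomputable def clarkeDirDeriv {n : ℕ} (φ : EuclideanSpace ℝ (Fin n) → ℝ)
    (x v : EuclideanSpace ℝ (Fin n)) : ℝ :=
  limsup (fun p : EuclideanSpace ℝ (Fin n) × ℝ => (φ (p.1 + p.2 • v) - φ p.1) / p.2)
    ((nhds x) ×ˢ (nhdsWithin 0 (Set.Ioi 0)))

/-- Clarke subdifferential. -/
def clarkeSubdiff {n : ℕ} (φ : EuclideanSpace ℝ (Fin n) → ℝ)
    (x : EuclideanSpace ℝ (Fin n)) : Set (EuclideanSpace ℝ (Fin n)) :=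
  {ζ | ∀ v, (inner ℝ ζ v : ℝ) ≤ clarkeDirDeriv φ x v}

lemma tendsto_poly2_exp (A C b : ℝ) (hb : 0 < b) :
    Tendsto (fun x : ℝ => (A + C * x ^ 2) * Real.exp (-b * x)) atTop (nhds 0) := by
  have hbx : Tendsto (fun x : ℝ => b * x) atTop atTop :=
    Tendsto.const_mul_atTop hb tendsto_id
  have h1 : Tendsto (fun x : ℝ => Real.exp (-b * x)) atTop (nhds 0) := by
    have := Real.tendsto_exp_neg_atTop_nhds_zero.comp hbx
    refine this.congr fun x => ?_
    simp [Function.comp, neg_mul]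
  have h2 : Tendsto (fun x : ℝ => (b * x) ^ 2 * Real.exp (-(b * x))) atTop (nhds 0) :=
    (Real.tendsto_pow_mul_exp_neg_atTop_nhds_zero 2).comp hbx
  have h3 : Tendsto (fun x : ℝ => A * Real.exp (-b * x)
      + (C / b ^ 2) * ((b * x) ^ 2 * Real.exp (-(b * x)))) atTop (nhds 0) := by
    have := (h1.const_mul A).add (h2.const_mul (C / b ^ 2))
    simpa using this
  refine h3.congr fun x => ?_
  have hb' : b ≠ 0 := ne_of_gt hb
  rw [show -(b * x) = -b * x by ring]
  field_simp

lemma ftc_lip {F g : ℝ → ℝ} {L : NNReal} (hF : LipschitzWith L F) {a b : ℝ} (hab : a ≤ b)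
    (hg : ∀ᵐ t ∂(volume.restrict (Ioc a b)), HasDerivAt F (g t) t) :
    IntegrableOn g (Ioc a b) ∧ F b - F a = ∫ t in Ioc a b, g t := by
  set u : ℕ → ℝ := fun k => 1 / (k + 1) with hu
  have hupos : ∀ k, 0 < u k := fun k => by positivity
  have hu0 : Tendsto u atTop (nhds 0) := tendsto_one_div_add_atTop_nhds_zero_nat
  set D : ℕ → ℝ → ℝ := fun k t => (F (t + u k) - F t) / u k with hD
  have hFc : Continuous F := hF.continuous
  have hFi : ∀ c d : ℝ, IntervalIntegrable F volume c d := fun c d => hFc.intervalIntegrable c d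
  have hseq : ∀ t : ℝ, Tendsto (fun k => t + u k) atTop (nhdsWithin t {t}ᶜ) := by
    intro t
    apply tendsto_nhdsWithin_of_tendsto_nhds_of_eventually_within
    · have h := hu0.const_add t
      simpa only [add_zero] using h
    · exact Eventually.of_forall fun k => by
        simp only [Set.mem_compl_iff, Set.mem_singleton_iff]
        nlinarith [hupos k]
  have hslope_eq : ∀ (f : ℝ → ℝ) (t : ℝ) (k : ℕ),
      slope f t (t + u k) = (f (t + u k) - f t) / u k := by
    intro f t k
    rw [slope_def_field]
    congr 1
    ring
  have hae : ∀ᵐ t ∂(volume.restrict (Ioc a b)), Tendsto (fun k => D k t) atTop (nhds (g t)) := by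
    filter_upwards [hg] with t ht
    have hslope := hasDerivAt_iff_tendsto_slope.1 ht
    have := hslope.comp (hseq t)
    refine this.congr fun k => ?_
    simp only [Function.comp]
    rw [hslope_eq F t k]
  have hDm : ∀ k, AEStronglyMeasurable (D k) (volume.restrict (Ioc a b)) := by
    intro k
    exact (((hFc.comp (continuous_id.add continuous_const)).sub hFc).div_const _).aestronglyMeasurable
  have hbd : ∀ k t, ‖D k t‖ ≤ (L : ℝ) := by
    intro k t
    have h1 : |F (t + u k) - F t| ≤ (L : ℝ) * u k := by
      have := hF.dist_le_mul (t + u k) t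
      simpa [Real.dist_eq, abs_of_pos (hupos k)] using this
    rw [Real.norm_eq_abs, hD]
    rw [abs_div, abs_of_pos (hupos k)]
    rw [div_le_iff₀ (hupos k)]
    simpa using h1
  haveI : IsFiniteMeasure (volume.restrict (Ioc a b)) :=
    ⟨by rw [Measure.restrict_apply_univ]; exact measure_Ioc_lt_top⟩
  have hgm : AEStronglyMeasurable g (volume.restrict (Ioc a b)) :=
    (aemeasurable_of_tendsto_metrizable_ae atTop (fun k => (hDm k).aemeasurable) hae).aestronglyMeasurable
  have hgb : ∀ᵐ t ∂(volume.restrict (Ioc a b)), ‖g t‖ ≤ (L : ℝ) := by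
    filter_upwards [hae] with t ht
    exact le_of_tendsto ht.norm (Eventually.of_forall fun k => hbd k t)
  have hgint : IntegrableOn g (Ioc a b) :=
    Integrable.mono' (integrable_const _) hgm hgb
  refine ⟨hgint, ?_⟩
  have hDCT : Tendsto (fun k => ∫ t in Ioc a b, D k t) atTop (nhds (∫ t in Ioc a b, g t)) :=
    tendsto_integral_of_dominated_convergence (fun _ => (L : ℝ)) hDm (integrable_const _)
      (fun k => Eventually.of_forall fun t => hbd k t) hae
  have hIk : ∀ k, ∫ t in Ioc a b, D k t
      = ((∫ t in b..(b + u k), F t) - ∫ t in a..(a + u k), F t) / u k := by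
    intro k
    rw [← intervalIntegral.integral_of_le hab]
    have h1 : ∫ t in a..b, D k t
        = ((∫ t in a..b, F (t + u k)) - ∫ t in a..b, F t) / u k := by
      simp only [hD, div_eq_mul_inv]
      rw [intervalIntegral.integral_mul_const]
      congr 1
      exact intervalIntegral.integral_sub
        ((hFc.comp (continuous_id.add continuous_const)).intervalIntegrable a b) (hFi a b)
    rw [h1, intervalIntegral.integral_comp_add_right]
    have e1 := intervalIntegral.integral_add_adjacent_intervals (hFi a (a + u k)) (hFi (a + u k) (b + u k))
    have e2 := intervalIntegral.integral_add_adjacent_intervals (hFi a b) (hFi b (b + u k))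
    congr 1
    linarith
  have hc : ∀ c : ℝ, Tendsto (fun k => (∫ t in c..(c + u k), F t) / u k) atTop (nhds (F c)) := by
    intro c
    have hd : HasDerivAt (fun v => ∫ t in c..v, F t) (F c) c :=
      intervalIntegral.integral_hasDerivAt_right (hFi c c)
        (hFc.stronglyMeasurable.stronglyMeasurableAtFilter) hFc.continuousAt
    have hslope := hasDerivAt_iff_tendsto_slope.1 hd
    have := hslope.comp (hseq c)
    refine this.congr fun k => ?_
    simp only [Function.comp]
    rw [hslope_eq _ c k, intervalIntegral.integral_same, sub_zero]
  have hlim2 : Tendsto (fun k => ∫ t in Ioc a b, D k t) atTop (nhds (F b - F a)) := by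
    have := (hc b).sub (hc a)
    refine this.congr fun k => ?_
    rw [hIk k, sub_div]
  exact (tendsto_nhds_unique hlim2 hDCT)


set_option maxHeartbeats 2000000 in
/-- lower bound for the Riccati-type value function. With
`φ = ½dist(·,𝒪)²` and `p` the positive root of `p²+λp−𝔠=0`, for any admissible
control `α` (measurable, `‖α‖ ≤ M`) with trajectory `y` starting at `x`, and any
a.e.-defined selection `q(t) ∈ ∂^C φ(y(t))` with `d/dt φ(y(t)) = ⟨q(t),α(t)⟩` and
`½|q(t)|² ≤ φ(y(t))` a.e., the pointwise bound
`p(λφ(y(t)) − d/dt φ(y(t))) ≤ ½|α(t)|² + 𝔠 φ(y(t))` holds a.e. on `[0,∞)`, and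
consequently `p·φ(x) ≤ ∫₀^∞ (½|α(t)|² + 𝔠 φ(y(t))) e^{−λt} dt`. -/
theorem stmt12 {n : ℕ} (O : Set (EuclideanSpace ℝ (Fin n)))
    (hO : O.Nonempty) (hOc : IsCompact O)
    (φ : EuclideanSpace ℝ (Fin n) → ℝ)
    (hφ : ∀ z, φ z = (1 / 2) * (infDist z O) ^ 2)
    (c lam M p : ℝ) (hc : 0 < c) (hlam : 0 < lam) (hM : 0 < M)
    (hp : p = (-lam + Real.sqrt (lam ^ 2 + 4 * c)) / 2)
    (x : EuclideanSpace ℝ (Fin n)) (α y : ℝ → EuclideanSpace ℝ (Fin n))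
    (hα_meas : Measurable α) (hα_bd : ∀ s, ‖α s‖ ≤ M)
    (hy0 : y 0 = x) (hyd : ∀ t, 0 ≤ t → HasDerivAt y (α t) t)
    (q : ℝ → EuclideanSpace ℝ (Fin n))
    (hq : ∀ᵐ t ∂volume, 0 ≤ t →
      q t ∈ clarkeSubdiff φ (y t) ∧
      HasDerivAt (fun s => φ (y s)) ((inner ℝ (q t) (α t) : ℝ)) t ∧
      (1 / 2) * ‖q t‖ ^ 2 ≤ φ (y t)) :
    (∀ᵐ t ∂volume, 0 ≤ t →
      p * (lam * φ (y t) - (inner ℝ (q t) (α t) : ℝ))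
        ≤ (1 / 2) * ‖α t‖ ^ 2 + c * φ (y t)) ∧
    p * φ x ≤ ∫ t in Ioi (0 : ℝ),
        ((1 / 2) * ‖α t‖ ^ 2 + c * φ (y t)) * Real.exp (-lam * t) := by
  have hφ0 : ∀ z, 0 ≤ φ z := fun z => by rw [hφ z]; positivity
  have hd0nn : (0:ℝ) ≤ infDist x O := infDist_nonneg
  obtain ⟨d0, hd0⟩ : ∃ d : ℝ, d = infDist x O := ⟨_, rfl⟩
  rw [← hd0] at hd0nn
  have hs2 : Real.sqrt (lam ^ 2 + 4 * c) ^ 2 = lam ^ 2 + 4 * c :=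
    Real.sq_sqrt (by positivity)
  have hsnn : 0 ≤ Real.sqrt (lam ^ 2 + 4 * c) := Real.sqrt_nonneg _
  have hppos : 0 < p := by
    rw [hp]; nlinarith [hs2, hsnn]
  have hpc : p ^ 2 + lam * p = c := by
    rw [hp]; nlinarith [hs2]
  -- Part 1 : pointwise a.e. inequality
  have hae1 : ∀ᵐ t ∂volume, 0 ≤ t →
      p * (lam * φ (y t) - (inner ℝ (q t) (α t) : ℝ))
        ≤ (1 / 2) * ‖α t‖ ^ 2 + c * φ (y t) := by
    filter_upwards [hq] with t h ht
    obtain ⟨-, -, hqb⟩ := h ht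
    have hcs : |(inner ℝ (q t) (α t) : ℝ)| ≤ ‖q t‖ * ‖α t‖ := abs_real_inner_le_norm _ _
    have h1 : -(‖q t‖ * ‖α t‖) ≤ (inner ℝ (q t) (α t) : ℝ) := neg_le_of_abs_le hcs
    have h2 : p * (-(‖q t‖ * ‖α t‖)) ≤ p * (inner ℝ (q t) (α t) : ℝ) :=
      mul_le_mul_of_nonneg_left h1 hppos.le
    have h3 : p ^ 2 * ((1/2) * ‖q t‖ ^ 2) ≤ p ^ 2 * φ (y t) :=
      mul_le_mul_of_nonneg_left hqb (sq_nonneg p)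
    nlinarith [sq_nonneg (‖α t‖ - p * ‖q t‖), hφ0 (y t)]
  refine ⟨hae1, ?_⟩
  -- continuity and Lipschitz facts
  have hφc : Continuous φ := by
    have hφe : φ = fun z => (1/2) * (infDist z O) ^ 2 := funext hφ
    rw [hφe]
    exact continuous_const.mul ((continuous_infDist_pt O).pow 2)
  have hycont : ContinuousOn y (Ici 0) := fun t ht => ((hyd t ht).continuousAt).continuousWithinAt
  have hyL : ∀ T : ℝ, ∀ s ∈ Icc (0:ℝ) T, ∀ t ∈ Icc (0:ℝ) T, ‖y s - y t‖ ≤ M * |s - t| := by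
    intro T s hs t ht
    have := (convex_Icc (0:ℝ) T).norm_image_sub_le_of_norm_hasDerivWithin_le
      (fun r hr => (hyd r hr.1).hasDerivWithinAt) (fun r _ => hα_bd r) ht hs
    simpa [Real.norm_eq_abs] using this
  have hyx : ∀ t : ℝ, 0 ≤ t → ‖y t - x‖ ≤ M * t := by
    intro t ht
    have h := hyL t t ⟨ht, le_rfl⟩ 0 ⟨le_rfl, ht⟩
    rw [hy0] at h
    simpa [abs_of_nonneg ht] using h
  have hdy : ∀ t : ℝ, 0 ≤ t → infDist (y t) O ≤ d0 + M * t := by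
    intro t ht
    rw [hd0]
    calc infDist (y t) O ≤ infDist x O + dist (y t) x := infDist_le_infDist_add_dist
    _ ≤ infDist x O + M * t := by
        rw [dist_eq_norm]
        exact add_le_add_right (hyx t ht) _
  have hφyb : ∀ t : ℝ, 0 ≤ t → φ (y t) ≤ d0 ^ 2 + M ^ 2 * t ^ 2 := by
    intro t ht
    rw [hφ]
    have h1 := hdy t ht
    have h2 : (0:ℝ) ≤ infDist (y t) O := infDist_nonneg
    nlinarith [sq_nonneg (d0 - M * t), mul_nonneg hM.le ht]
  -- derivative of the exponential
  have hdexp : ∀ u : ℝ, HasDerivAt (fun s : ℝ => Real.exp (-lam * s)) (-lam * Real.exp (-lam * u)) u := by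
    intro u
    have h := ((hasDerivAt_id u).const_mul (-lam)).exp
    simpa [mul_comm] using h
  -- the integrand
  obtain ⟨G, hG⟩ : ∃ G : ℝ → ℝ,
      G = fun t => ((1/2) * ‖α t‖ ^ 2 + c * φ (y t)) * Real.exp (-lam * t) := ⟨_, rfl⟩
  have hGnn : ∀ t, 0 ≤ G t := fun t => by
    rw [hG]
    exact mul_nonneg (add_nonneg (by positivity) (mul_nonneg hc.le (hφ0 _))) (Real.exp_pos _).le
  have hGmeas : AEStronglyMeasurable G (volume.restrict (Ioi 0)) := by
    rw [hG]
    apply AEStronglyMeasurable.mul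
    · apply AEStronglyMeasurable.add
      · exact ((hα_meas.norm.pow_const 2).aestronglyMeasurable.const_mul _)
      · have h1 : AEStronglyMeasurable (fun t => φ (y t)) (volume.restrict (Ici 0)) :=
          (hφc.comp_continuousOn hycont).aestronglyMeasurable measurableSet_Ici
        exact (h1.mono_measure (Measure.restrict_mono Ioi_subset_Ici_self le_rfl)).const_mul _
    · exact (Real.continuous_exp.comp (continuous_const.mul continuous_id)).aestronglyMeasurable
  obtain ⟨A, hA⟩ : ∃ A : ℝ, A = (1/2) * M ^ 2 + c * d0 ^ 2 := ⟨_, rfl⟩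
  obtain ⟨C2, hC2⟩ : ∃ C2 : ℝ, C2 = c * M ^ 2 := ⟨_, rfl⟩
  have hΨint : IntegrableOn (fun t => (A + C2 * t ^ 2) * Real.exp (-lam * t)) (Ioi 0) := by
    apply integrable_of_isBigO_exp_neg (half_pos hlam)
    · apply Continuous.continuousOn
      exact ((continuous_const.add (continuous_const.mul (continuous_pow 2))).mul
        (Real.continuous_exp.comp (continuous_const.mul continuous_id)))
    · have ht0 := tendsto_poly2_exp A C2 (lam/2) (half_pos hlam)
      have hO1 := ht0.isBigO_one (F := ℝ)
      have heq : (fun t : ℝ => (A + C2 * t ^ 2) * Real.exp (-lam * t))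
          = fun t => ((A + C2 * t ^ 2) * Real.exp (-(lam/2) * t)) * Real.exp (-(lam/2) * t) := by
        funext t
        rw [mul_assoc, ← Real.exp_add]
        congr 2
        ring
      rw [heq]
      have := hO1.mul (Asymptotics.isBigO_refl (fun t : ℝ => Real.exp (-(lam/2) * t)) atTop)
      simpa using this
  have hGint : IntegrableOn G (Ioi 0) := by
    apply hΨint.mono' hGmeas
    filter_upwards [ae_restrict_mem measurableSet_Ioi] with t ht
    rw [Real.norm_eq_abs, abs_of_nonneg (hGnn t)]
    rw [hG]
    apply mul_le_mul_of_nonneg_right _ (Real.exp_pos _).le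
    have h1 := hφyb t (le_of_lt ht)
    have h2 := hα_bd t
    have h3 : ‖α t‖ ^ 2 ≤ M ^ 2 := by nlinarith [norm_nonneg (α t)]
    rw [hA, hC2]
    nlinarith [hc.le]
  -- key inequality for each finite horizon T
  have hkey : ∀ T : ℝ, 0 < T →
      p * φ x ≤ (∫ t in Ioi (0:ℝ), G t) + p * (φ (y T) * Real.exp (-lam * T)) := by
    intro T hT
    obtain ⟨R, hR⟩ : ∃ R : ℝ, R = d0 + M * (T + 1) := ⟨_, rfl⟩
    have hR0 : 0 ≤ R := by
      have : (0:ℝ) ≤ M * (T + 1) := mul_nonneg hM.le (by linarith)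
      rw [hR]; linarith
    have hdb : ∀ t ∈ Icc (0:ℝ) (T+1), infDist (y t) O ≤ R := by
      intro t ht
      refine le_trans (hdy t ht.1) ?_
      rw [hR]
      nlinarith [hM.le, ht.2]
    have hexpL : ∀ s ∈ Icc (0:ℝ) (T+1), ∀ t ∈ Icc (0:ℝ) (T+1),
        |Real.exp (-lam * s) - Real.exp (-lam * t)| ≤ lam * |s - t| := by
      intro s hs t ht
      have hb : ∀ u ∈ Icc (0:ℝ) (T+1), ‖-lam * Real.exp (-lam * u)‖ ≤ lam := by
        intro u hu
        rw [Real.norm_eq_abs, abs_mul, abs_neg, abs_of_pos hlam,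
          abs_of_pos (Real.exp_pos _)]
        have : Real.exp (-lam * u) ≤ 1 := by
          rw [Real.exp_le_one_iff]
          nlinarith [hu.1]
        nlinarith
      have := (convex_Icc (0:ℝ) (T+1)).norm_image_sub_le_of_norm_hasDerivWithin_le
        (fun u _ => (hdexp u).hasDerivWithinAt) hb ht hs
      simpa [Real.norm_eq_abs] using this
    have hφyL : ∀ s ∈ Icc (0:ℝ) (T+1), ∀ t ∈ Icc (0:ℝ) (T+1),
        |φ (y s) - φ (y t)| ≤ R * M * |s - t| := by
      intro s hs t ht
      have hab : |infDist (y s) O - infDist (y t) O| ≤ M * |s - t| := by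
        have h1 := (lipschitz_infDist_pt O).dist_le_mul (y s) (y t)
        rw [Real.dist_eq] at h1
        have h3 := hyL (T+1) s hs t ht
        calc |infDist (y s) O - infDist (y t) O| ≤ 1 * dist (y s) (y t) := h1
        _ = ‖y s - y t‖ := by rw [one_mul, dist_eq_norm]
        _ ≤ M * |s - t| := h3
      have ha := hdb s hs
      have hb := hdb t ht
      have ha0 : 0 ≤ infDist (y s) O := infDist_nonneg
      have hb0 : 0 ≤ infDist (y t) O := infDist_nonneg
      rw [hφ, hφ]
      rw [abs_le]
      have h5 := (abs_le.1 hab).2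
      have h6 := (abs_le.1 hab).1
      have h7 : 0 ≤ M * |s - t| := mul_nonneg hM.le (abs_nonneg _)
      constructor
      · nlinarith [mul_le_mul_of_nonneg_left h6 (add_nonneg ha0 hb0)]
      · nlinarith [mul_le_mul_of_nonneg_left h5 (add_nonneg ha0 hb0)]
    obtain ⟨K, hK⟩ : ∃ K : ℝ, K = R * M + (1/2) * R ^ 2 * lam := ⟨_, rfl⟩
    have hKnn : 0 ≤ K := by
      rw [hK]
      have : (0:ℝ) ≤ (1/2) * R ^ 2 * lam :=
        mul_nonneg (mul_nonneg (by norm_num) (sq_nonneg R)) hlam.le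
      nlinarith [mul_nonneg hR0 hM.le]
    have hfL : ∀ s ∈ Icc (0:ℝ) (T+1), ∀ t ∈ Icc (0:ℝ) (T+1),
        |φ (y s) * Real.exp (-lam * s) - φ (y t) * Real.exp (-lam * t)| ≤ K * |s - t| := by
      intro s hs t ht
      have hsplit : φ (y s) * Real.exp (-lam * s) - φ (y t) * Real.exp (-lam * t)
          = φ (y s) * (Real.exp (-lam * s) - Real.exp (-lam * t))
            + (φ (y s) - φ (y t)) * Real.exp (-lam * t) := by ring
      rw [hsplit]
      have h1 : |φ (y s)| ≤ (1/2) * R ^ 2 := by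
        rw [abs_of_nonneg (hφ0 _), hφ]
        have := hdb s hs
        nlinarith [infDist_nonneg (x := y s) (s := O)]
      have h2 := hexpL s hs t ht
      have h3 := hφyL s hs t ht
      have h4 : |Real.exp (-lam * t)| ≤ 1 := by
        rw [abs_of_pos (Real.exp_pos _), Real.exp_le_one_iff]
        nlinarith [ht.1]
      calc |φ (y s) * (Real.exp (-lam * s) - Real.exp (-lam * t))
            + (φ (y s) - φ (y t)) * Real.exp (-lam * t)|
          ≤ |φ (y s)| * |Real.exp (-lam * s) - Real.exp (-lam * t)|
            + |φ (y s) - φ (y t)| * |Real.exp (-lam * t)| := by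
            rw [← abs_mul, ← abs_mul]; exact abs_add_le _ _
      _ ≤ ((1/2) * R ^ 2) * (lam * |s - t|) + (R * M * |s - t|) * 1 :=
            add_le_add
              (mul_le_mul h1 h2 (abs_nonneg _) (by positivity))
              (mul_le_mul h3 h4 (abs_nonneg _)
                (mul_nonneg (mul_nonneg hR0 hM.le) (abs_nonneg _)))
      _ = K * |s - t| := by rw [hK]; ring
    have hLip : LipschitzOnWith (Real.toNNReal K)
        (fun t => φ (y t) * Real.exp (-lam * t)) (Icc 0 (T+1)) := by
      rw [lipschitzOnWith_iff_dist_le_mul]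
      intro s hs t ht
      rw [Real.dist_eq, Real.dist_eq]
      calc |φ (y s) * Real.exp (-lam * s) - φ (y t) * Real.exp (-lam * t)|
          ≤ K * |s - t| := hfL s hs t ht
      _ = (Real.toNNReal K : ℝ) * |s - t| := by rw [Real.coe_toNNReal K hKnn]
    obtain ⟨F, hFlip, hFeq⟩ := hLip.extend_real
    have hFval : ∀ t ∈ Icc (0:ℝ) (T+1), F t = φ (y t) * Real.exp (-lam * t) :=
      fun t ht => (hFeq ht).symm
    have hgae : ∀ᵐ t ∂(volume.restrict (Ioc 0 T)), HasDerivAt F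
        (((inner ℝ (q t) (α t) : ℝ) - lam * φ (y t)) * Real.exp (-lam * t)) t := by
      have hq' := hq.filter_mono (ae_mono (Measure.restrict_le_self (μ := volume) (s := Ioc (0:ℝ) T)))
      filter_upwards [hq', ae_restrict_mem measurableSet_Ioc] with t hqt htm
      obtain ⟨-, hd, -⟩ := hqt htm.1.le
      have hdf : HasDerivAt (fun s => φ (y s) * Real.exp (-lam * s))
          ((inner ℝ (q t) (α t) : ℝ) * Real.exp (-lam * t)
            + φ (y t) * (-lam * Real.exp (-lam * t))) t := hd.mul (hdexp t)
      have hFf : F =ᶠ[nhds t] fun s => φ (y s) * Real.exp (-lam * s) := by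
        have hmem : Ioo (0:ℝ) (T+1) ∈ nhds t :=
          Ioo_mem_nhds htm.1 (lt_of_le_of_lt htm.2 (by linarith))
        filter_upwards [hmem] with s hs
        exact hFval s ⟨hs.1.le, hs.2.le⟩
      have hres := hdf.congr_of_eventuallyEq hFf
      exact hres.congr_deriv (by ring)
    obtain ⟨hgInt, hFTC⟩ := ftc_lip hFlip hT.le hgae
    have hF0 : F 0 = φ x := by
      rw [hFval 0 ⟨le_rfl, by linarith⟩, hy0]
      simp
    have hFT : F T = φ (y T) * Real.exp (-lam * T) :=
      hFval T ⟨hT.le, by linarith⟩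
    have hLHSeq : ∀ t : ℝ,
        p * ((lam * φ (y t) - (inner ℝ (q t) (α t) : ℝ)) * Real.exp (-lam * t))
          = (-p) * (((inner ℝ (q t) (α t) : ℝ) - lam * φ (y t)) * Real.exp (-lam * t)) :=
      fun t => by ring
    have hInt1 : Integrable
        (fun t => p * ((lam * φ (y t) - (inner ℝ (q t) (α t) : ℝ)) * Real.exp (-lam * t)))
        (volume.restrict (Ioc 0 T)) :=
      (hgInt.const_mul (-p)).congr (Eventually.of_forall fun t => (hLHSeq t).symm)
    have hInt2 : Integrable G (volume.restrict (Ioc 0 T)) :=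
      hGint.mono_set Ioc_subset_Ioi_self
    have hptwise : ∀ᵐ t ∂(volume.restrict (Ioc 0 T)),
        p * ((lam * φ (y t) - (inner ℝ (q t) (α t) : ℝ)) * Real.exp (-lam * t)) ≤ G t := by
      filter_upwards [hae1.filter_mono (ae_mono (Measure.restrict_le_self (μ := volume) (s := Ioc (0:ℝ) T))),
        ae_restrict_mem measurableSet_Ioc] with t h1 h2
      have h3 := h1 h2.1.le
      have h4 := mul_le_mul_of_nonneg_right h3 (Real.exp_pos (-lam * t)).le
      calc p * ((lam * φ (y t) - (inner ℝ (q t) (α t) : ℝ)) * Real.exp (-lam * t))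
          = (p * (lam * φ (y t) - (inner ℝ (q t) (α t) : ℝ))) * Real.exp (-lam * t) := by ring
      _ ≤ ((1/2) * ‖α t‖ ^ 2 + c * φ (y t)) * Real.exp (-lam * t) := h4
      _ = G t := by rw [hG]
    have hmono := integral_mono_ae hInt1 hInt2 hptwise
    have hcomp : ∫ t in Ioc (0:ℝ) T,
        p * ((lam * φ (y t) - (inner ℝ (q t) (α t) : ℝ)) * Real.exp (-lam * t))
        = p * (φ x - φ (y T) * Real.exp (-lam * T)) := by
      rw [integral_congr_ae (Eventually.of_forall hLHSeq), integral_const_mul, ← hFTC, hF0, hFT]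
      ring
    have hsub : ∫ t in Ioc (0:ℝ) T, G t ≤ ∫ t in Ioi (0:ℝ), G t :=
      setIntegral_mono_set hGint (Eventually.of_forall fun t => hGnn t)
        (HasSubset.Subset.eventuallyLE Ioc_subset_Ioi_self)
    have hexp2 : p * (φ x - φ (y T) * Real.exp (-lam * T))
        = p * φ x - p * (φ (y T) * Real.exp (-lam * T)) := by ring
    linarith [hmono, hsub, hcomp, hexp2]
  -- pass to the limit T → ∞
  have hfT0 : Tendsto (fun T : ℝ => p * (φ (y T) * Real.exp (-lam * T))) atTop (nhds 0) := by
    have hb := tendsto_poly2_exp (p * d0 ^ 2) (p * M ^ 2) lam hlam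
    apply squeeze_zero' ?_ ?_ hb
    · filter_upwards [eventually_ge_atTop (0:ℝ)] with T _
      exact mul_nonneg hppos.le (mul_nonneg (hφ0 _) (Real.exp_pos _).le)
    · filter_upwards [eventually_ge_atTop (0:ℝ)] with T hT
      have h1 := hφyb T hT
      have h2 := mul_le_mul_of_nonneg_right
        (mul_le_mul_of_nonneg_left h1 hppos.le) (Real.exp_pos (-lam * T)).le
      calc p * (φ (y T) * Real.exp (-lam * T))
          = (p * φ (y T)) * Real.exp (-lam * T) := by ring
      _ ≤ (p * (d0 ^ 2 + M ^ 2 * T ^ 2)) * Real.exp (-lam * T) := h2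
      _ = (p * d0 ^ 2 + (p * M ^ 2) * T ^ 2) * Real.exp (-lam * T) := by ring
  have hfinal : Tendsto (fun T : ℝ => (∫ t in Ioi (0:ℝ), G t)
      + p * (φ (y T) * Real.exp (-lam * T))) atTop
      (nhds ((∫ t in Ioi (0:ℝ), G t) + 0)) := tendsto_const_nhds.add hfT0
  have hle := ge_of_tendsto hfinal
    ((eventually_gt_atTop (0:ℝ)).mono fun T hT => hkey T hT)
  rw [add_zero] at hle
  simp only [hG] at hle
  exact hle
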